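/- Let k be a field, n a natural number, and M, N objects of S_k(ñ). Then dim_k Hom_{S_k(n)}(π(M), π(N)) = Σ_{g∈ℤ} dim_k Hom_{S_k(ñ)}(M, N[g]), where only finitely many summands on the right are nonzero; equivalently, there is an isomorphism of k-vector spaces Hom_{S_k(n)}(π M, π N) ≅ ⊕_{g∈ℤ} Hom_{S_k(ñ)}(M, N[g]). -/

import Mathlib

universe u

/-- An object of the category `S_k(n)`: a finite-dimensional `k`-vector space `V`,
a `k`-subspace `U ⊆ V`, and a linear operator `T : V → V` with `T ^ n = 0` and
`T (U) ⊆ U`. -/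
structure SObj (k : Type u) [Field k] (n : ℕ) : Type (u + 1) where
  carrier : Type u
  [instAddCommGroup : AddCommGroup carrier]
  [instModule : Module k carrier]
  [instFin : FiniteDimensional k carrier]
  U : Submodule k carrier
  T : carrier →ₗ[k] carrier
  pow_eq_zero : T ^ n = 0
  maps_U : ∀ x ∈ U, T x ∈ U

namespace SObj

attribute [instance] instAddCommGroup instModule instFin

variable {k : Type u} [Field k] {n : ℕ}

/-- Isomorphism of objects of `S_k(n)`: a linear bijection intertwining the operators
and carrying one invariant subspace onto the other. -/
def Iso (X Y : SObj k n) : Prop :=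
  ∃ e : X.carrier ≃ₗ[k] Y.carrier,
    (∀ v, e (X.T v) = Y.T (e v)) ∧ X.U.map e.toLinearMap = Y.U

/-- Indecomposability: the object is nonzero and there is no decomposition
`V = V₁ ⊕ V₂` into two nonzero `T`-invariant subspaces with
`U = (U ∩ V₁) ⊕ (U ∩ V₂)`. -/
def Indec (X : SObj k n) : Prop :=
  (∃ v : X.carrier, v ≠ 0) ∧
    ¬∃ V₁ V₂ : Submodule k X.carrier,
        V₁ ≠ ⊥ ∧ V₂ ≠ ⊥ ∧ IsCompl V₁ V₂ ∧
          (∀ x ∈ V₁, X.T x ∈ V₁) ∧ (∀ x ∈ V₂, X.T x ∈ V₂) ∧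
            X.U = X.U ⊓ V₁ ⊔ X.U ⊓ V₂

/-- The dimension pair `(dim_k V, dim_k U)` of an object of `S_k(n)`. -/
noncomputable def dimPair (X : SObj k n) : ℕ × ℕ :=
  (Module.finrank k X.carrier, Module.finrank k X.U)

end SObj

/-- An object of the covering category `S_k(ñ)`, encoded as an object `(V,U,T)` of
`S_k(n)` together with a ℤ-grading `V = ⊕_{i∈ℤ} V_i` (finitely many nonzero pieces)
such that `T(V_i) ⊆ V_{i−1}` and `U = ⊕_i (U ∩ V_i)`.  Here `V_i` plays the role of
the vector space `M_i` and `U ∩ V_i` the role of (the image under the inclusion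
`β_i` of) the vector space `M_{i'}`. -/
structure SCovObj (k : Type u) [Field k] (n : ℕ) extends SObj k n where
  grading : ℤ → Submodule k carrier
  indep : iSupIndep grading
  iSup_grading : (⨆ i, grading i) = ⊤
  finite_support : {i : ℤ | grading i ≠ ⊥}.Finite
  T_grading : ∀ i : ℤ, ∀ x ∈ grading i, T x ∈ grading (i - 1)
  U_grading : U = ⨆ i : ℤ, U ⊓ grading i

namespace SCovObj

variable {k : Type u} [Field k] {n : ℕ}

/-- Indecomposability in the covering category: the object is nonzero and admits no direct
decomposition into two nonzero graded subobjects compatible with `T` and `U`. -/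
def Indec (M : SCovObj k n) : Prop :=
  (∃ v : M.carrier, v ≠ 0) ∧
    ¬∃ V₁ V₂ : Submodule k M.carrier,
        V₁ ≠ ⊥ ∧ V₂ ≠ ⊥ ∧ IsCompl V₁ V₂ ∧
          (∀ x ∈ V₁, M.T x ∈ V₁) ∧ (∀ x ∈ V₂, M.T x ∈ V₂) ∧
            M.U = M.U ⊓ V₁ ⊔ M.U ⊓ V₂ ∧
            V₁ = (⨆ j, V₁ ⊓ M.grading j) ∧ V₂ = (⨆ j, V₂ ⊓ M.grading j)

/-- `x_i = dim_k M_i`, the total-space part of the dimension vector, as an integer. -/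
noncomputable def a (M : SCovObj k n) (i : ℤ) : ℤ :=
  (Module.finrank k (M.grading i) : ℤ)

/-- `x_{i'} = dim_k M_{i'}`, the subspace part of the dimension vector, as an integer. -/
noncomputable def b (M : SCovObj k n) (i : ℤ) : ℤ :=
  (Module.finrank k ↥(M.U ⊓ M.grading i) : ℤ)

/-- The quadratic form `χ` (for `n = 6`) evaluated at the dimension vector of `M`. -/
noncomputable def chi (M : SCovObj k n) : ℤ :=
  ∑ᶠ i : ℤ,
    (M.a i ^ 2 + M.b i ^ 2 - M.a i * M.a (i + 1) - M.b i * M.b (i + 1)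
      - M.b i * M.a i + M.a i * M.a (i + 6) + M.b i * M.b (i + 6) + M.b (i + 1) * M.a i)

/-- `π(x)`, first component: `Σ_i dim_k M_i`. -/
noncomputable def piV (M : SCovObj k n) : ℕ :=
  ∑ᶠ i : ℤ, Module.finrank k (M.grading i)

/-- `π(x)`, second component: `Σ_i dim_k M_{i'}`. -/
noncomputable def piU (M : SCovObj k n) : ℕ :=
  ∑ᶠ i : ℤ, Module.finrank k ↥(M.U ⊓ M.grading i)

/-- `t(x) = #{i ∈ ℤ : M_i ≠ 0}`, the size of the support of the total space. -/
noncomputable def tsupp (M : SCovObj k n) : ℕ :=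
  {i : ℤ | M.grading i ≠ ⊥}.ncard

end SCovObj

/-- The space of morphisms `(V,U,T) → (V',U',T')` in `S_k(n)`: linear maps `f : V → V'`
with `f(U) ⊆ U'` and `f ∘ T = T' ∘ f`, as a `k`-subspace of all linear maps. -/
def homS {k : Type u} [Field k] {n : ℕ} (X Y : SObj k n) :
    Submodule k (X.carrier →ₗ[k] Y.carrier) where
  carrier := {f | (∀ x ∈ X.U, f x ∈ Y.U) ∧ f ∘ₗ X.T = Y.T ∘ₗ f}
  add_mem' := by
    rintro f g ⟨hf1, hf2⟩ ⟨hg1, hg2⟩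
    exact ⟨fun x hx => Y.U.add_mem (hf1 x hx) (hg1 x hx),
      by rw [LinearMap.add_comp, LinearMap.comp_add, hf2, hg2]⟩
  zero_mem' := ⟨fun x _ => by simp, by rw [LinearMap.zero_comp, LinearMap.comp_zero]⟩
  smul_mem' := by
    rintro c f ⟨hf1, hf2⟩
    exact ⟨fun x hx => by simpa using Y.U.smul_mem c (hf1 x hx),
      by rw [LinearMap.smul_comp, hf2, LinearMap.comp_smul]⟩

/-- The space of morphisms `M → N[g]` in `S_k(ñ)`: morphisms of the underlying triples which
moreover shift the grading by `g`, i.e. `f(M_i) ⊆ N_{i−g}` for all `i`.  (Recall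
`N[g]_i = N_{i−g}`.) -/
def homCov {k : Type u} [Field k] {n : ℕ} (M N : SCovObj k n) (g : ℤ) :
    Submodule k (M.carrier →ₗ[k] N.carrier) where
  carrier := {f | ((∀ x ∈ M.U, f x ∈ N.U) ∧ f ∘ₗ M.T = N.T ∘ₗ f) ∧
    ∀ i : ℤ, ∀ x ∈ M.grading i, f x ∈ N.grading (i - g)}
  add_mem' := by
    rintro f f' ⟨⟨hf1, hf2⟩, hf3⟩ ⟨⟨hg1, hg2⟩, hg3⟩
    exact ⟨⟨fun x hx => N.U.add_mem (hf1 x hx) (hg1 x hx),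
      by rw [LinearMap.add_comp, LinearMap.comp_add, hf2, hg2]⟩,
      fun i x hx => (N.grading (i - g)).add_mem (hf3 i x hx) (hg3 i x hx)⟩
  zero_mem' := ⟨⟨fun x _ => by simp, by rw [LinearMap.zero_comp, LinearMap.comp_zero]⟩,
    fun i x _ => by simp⟩
  smul_mem' := by
    rintro c f ⟨⟨hf1, hf2⟩, hf3⟩
    exact ⟨⟨fun x hx => by simpa using N.U.smul_mem c (hf1 x hx),
      by rw [LinearMap.smul_comp, hf2, LinearMap.comp_smul]⟩,
      fun i x hx => by simpa using (N.grading (i - g)).smul_mem c (hf3 i x hx)⟩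

section Aux

open DirectSum

variable {k : Type u} [Field k] {n : ℕ}

namespace SCovObj

variable (M : SCovObj k n)

/-- The grading is an internal direct sum decomposition. -/
theorem internal : DirectSum.IsInternal M.grading :=
  DirectSum.isInternal_submodule_of_iSupIndep_of_iSup_eq_top M.indep M.iSup_grading

/-- The linear equivalence `⨁ i, M i ≃ V` coming from internality. -/
noncomputable def deco : (⨁ i : ℤ, M.grading i) ≃ₗ[k] M.carrier :=
  LinearEquiv.ofBijective (DirectSum.coeLinearMap M.grading) M.internal

/-- The projection onto the `i`-th graded piece, as an endomorphism of `V`. -/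
noncomputable def prj (i : ℤ) : M.carrier →ₗ[k] M.carrier :=
  (M.grading i).subtype ∘ₗ (DirectSum.component k ℤ (fun j => M.grading j) i) ∘ₗ
    M.deco.symm.toLinearMap

theorem prj_apply (i : ℤ) (x : M.carrier) :
    M.prj i x = ((M.deco.symm x) i : M.carrier) := rfl

theorem prj_mem (i : ℤ) (x : M.carrier) : M.prj i x ∈ M.grading i :=
  Submodule.coe_mem _

theorem prj_same {i : ℤ} {x : M.carrier} (hx : x ∈ M.grading i) : M.prj i x = x := by
  rw [prj_apply]
  rw [show M.deco.symm x = (LinearEquiv.ofBijective (DirectSum.coeLinearMap M.grading)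
    M.internal).symm x from rfl, M.internal.ofBijective_coeLinearMap_of_mem hx]

theorem prj_ne {i j : ℤ} (hij : j ≠ i) {x : M.carrier} (hx : x ∈ M.grading j) :
    M.prj i x = 0 := by
  rw [prj_apply]
  rw [show M.deco.symm x = (LinearEquiv.ofBijective (DirectSum.coeLinearMap M.grading)
    M.internal).symm x from rfl, M.internal.ofBijective_coeLinearMap_of_mem_ne hij hx]
  rfl

theorem prj_bot {i : ℤ} (h : M.grading i = ⊥) (x : M.carrier) : M.prj i x = 0 := by
  have := M.prj_mem i x
  rw [h, Submodule.mem_bot] at this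
  exact this

theorem prj_sum {s : Finset ℤ} (hs : ∀ j, M.grading j ≠ ⊥ → j ∈ s) (x : M.carrier) :
    ∑ j ∈ s, M.prj j x = x := by
  classical
  set w := M.deco.symm x with hw
  have hsupp : DFinsupp.support w ⊆ s := by
    intro j hj
    rw [DFinsupp.mem_support_iff] at hj
    refine hs j ?_
    intro hbot
    apply hj
    have h0 : (w j : M.carrier) = 0 :=
      (Submodule.eq_bot_iff _).mp hbot _ (Submodule.coe_mem (w j))
    exact ZeroMemClass.coe_eq_zero.mp h0
  have h1 : ∑ j ∈ s, (DirectSum.of (fun j => M.grading j) j (w j)) = w := by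
    have h2 := DirectSum.sum_support_of (β := fun j => ↥(M.grading j)) w
    refine Eq.trans ?_ h2
    refine (Finset.sum_subset hsupp ?_).symm
    intro j _ hj
    rw [DFinsupp.notMem_support_iff] at hj
    rw [hj, map_zero]
  calc ∑ j ∈ s, M.prj j x = ∑ j ∈ s, DirectSum.coeLinearMap M.grading
        (DirectSum.of (fun j => M.grading j) j (w j)) := by
        refine Finset.sum_congr rfl fun j _ => ?_
        rw [DirectSum.coeLinearMap_of, prj_apply]
    _ = DirectSum.coeLinearMap M.grading w := by rw [← map_sum, h1]
    _ = M.deco w := rfl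
    _ = x := by rw [hw, LinearEquiv.apply_symm_apply]

/-- Projections preserve the invariant subspace `U`. -/
theorem prj_U {u : M.carrier} (hu : u ∈ M.U) (i : ℤ) : M.prj i u ∈ M.U := by
  have hu' : u ∈ ⨆ j : ℤ, M.U ⊓ M.grading j := by rw [← M.U_grading]; exact hu
  refine Submodule.iSup_induction (motive := fun x => M.prj i x ∈ M.U)
    (fun j => M.U ⊓ M.grading j) hu' ?_ ?_ ?_
  · intro j x hx
    show M.prj i x ∈ M.U
    by_cases hij : j = i
    · rw [M.prj_same (hij ▸ hx.2)]; exact hx.1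
    · rw [M.prj_ne hij hx.2]; exact M.U.zero_mem
  · show M.prj i 0 ∈ M.U
    rw [map_zero]; exact M.U.zero_mem
  · intro x y hx hy
    show M.prj i (x + y) ∈ M.U
    rw [map_add]; exact M.U.add_mem hx hy

/-- Two linear maps agreeing on every graded piece agree. -/
theorem ext_graded {W : Type u} [AddCommGroup W] [Module k W]
    {f g : M.carrier →ₗ[k] W} (h : ∀ i : ℤ, ∀ x ∈ M.grading i, f x = g x) : f = g := by
  have hker : ∀ i : ℤ, M.grading i ≤ LinearMap.ker (f - g) := by
    intro i x hx
    rw [LinearMap.mem_ker, LinearMap.sub_apply, sub_eq_zero]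
    exact h i x hx
  have : LinearMap.ker (f - g) = ⊤ := by
    rw [← top_le_iff, ← M.iSup_grading]
    exact iSup_le hker
  have : f - g = 0 := LinearMap.ker_eq_top.mp this
  exact sub_eq_zero.mp this

/-- Projections intertwine with `T` with a shift. -/
theorem prj_T (i : ℤ) (x : M.carrier) : M.prj (i - 1) (M.T x) = M.T (M.prj i x) := by
  have := M.ext_graded (f := M.prj (i - 1) ∘ₗ M.T) (g := M.T ∘ₗ M.prj i) ?_
  · exact LinearMap.congr_fun this x
  intro j x hx
  simp only [LinearMap.comp_apply]
  by_cases hij : j = i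
  · subst hij
    rw [M.prj_same (M.T_grading j x hx), M.prj_same hx]
  · rw [M.prj_ne (by omega : j - 1 ≠ i - 1) (M.T_grading j x hx),
      M.prj_ne hij hx, map_zero]

end SCovObj

variable (M N : SCovObj k n)

/-- The finite support of the grading of `M`, as a `Finset`. -/
noncomputable def suppF (M : SCovObj k n) : Finset ℤ := M.finite_support.toFinset

theorem mem_suppF {M : SCovObj k n} {i : ℤ} : i ∈ suppF M ↔ M.grading i ≠ ⊥ :=
  M.finite_support.mem_toFinset

/-- The degree-`g` component operator on linear maps `V → V'`. -/
noncomputable def Phi (g : ℤ) : (M.carrier →ₗ[k] N.carrier) →ₗ[k] (M.carrier →ₗ[k] N.carrier) where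
  toFun f := ∑ i ∈ suppF M, N.prj (i - g) ∘ₗ f ∘ₗ M.prj i
  map_add' f f' := by
    rw [← Finset.sum_add_distrib]
    refine Finset.sum_congr rfl fun i _ => ?_
    rw [LinearMap.add_comp, LinearMap.comp_add]
  map_smul' c f := by
    rw [RingHom.id_apply, Finset.smul_sum]
    refine Finset.sum_congr rfl fun i _ => ?_
    rw [LinearMap.smul_comp, LinearMap.comp_smul]

theorem Phi_apply (g : ℤ) (f : M.carrier →ₗ[k] N.carrier) (x : M.carrier) :
    Phi M N g f x = ∑ i ∈ suppF M, N.prj (i - g) (f (M.prj i x)) := by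
  simp [Phi, LinearMap.sum_apply]

theorem Phi_apply_graded (g : ℤ) (f : M.carrier →ₗ[k] N.carrier) {i : ℤ} {x : M.carrier}
    (hx : x ∈ M.grading i) : Phi M N g f x = N.prj (i - g) (f x) := by
  rw [Phi_apply]
  by_cases hi : i ∈ suppF M
  · rw [Finset.sum_eq_single i]
    · rw [M.prj_same hx]
    · intro j _ hj
      rw [M.prj_ne (by omega : i ≠ j) hx, map_zero, map_zero]
    · exact fun h => absurd hi h
  · have : x = 0 := by
      have hbot : M.grading i = ⊥ := not_not.mp (fun h => hi (mem_suppF.mpr h))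
      rw [hbot, Submodule.mem_bot] at hx; exact hx
    subst this
    rw [map_zero, map_zero]
    refine (Finset.sum_eq_zero fun j _ => ?_)
    rw [map_zero, map_zero, map_zero]

/-- `Phi g` maps `homS` into `homCov g`. -/
theorem Phi_mem_homCov (g : ℤ) {f : M.carrier →ₗ[k] N.carrier}
    (hf : f ∈ homS M.toSObj N.toSObj) : Phi M N g f ∈ homCov M N g := by
  obtain ⟨hfU, hfT⟩ := hf
  refine ⟨⟨?_, ?_⟩, ?_⟩
  · intro u hu
    rw [Phi_apply]
    refine N.U.sum_mem fun i _ => ?_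
    exact N.prj_U (hfU _ (M.prj_U hu i)) _
  · refine (M.ext_graded ?_)
    intro i x hx
    simp only [LinearMap.comp_apply]
    rw [Phi_apply_graded M N g f (M.T_grading i x hx),
      Phi_apply_graded M N g f hx]
    have hcomm : f (M.T x) = N.T (f x) := LinearMap.congr_fun hfT x
    rw [hcomm, show i - 1 - g = (i - g) - 1 by omega, N.prj_T]
  · intro i x hx
    rw [Phi_apply_graded M N g f hx]
    exact N.prj_mem _ _

theorem Phi_eq_self (g : ℤ) {f : M.carrier →ₗ[k] N.carrier}
    (hf : f ∈ homCov M N g) : Phi M N g f = f := by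
  refine M.ext_graded fun i x hx => ?_
  rw [Phi_apply_graded M N g f hx, N.prj_same (hf.2 i x hx)]

theorem Phi_eq_zero (g g' : ℤ) (hgg' : g' ≠ g) {f : M.carrier →ₗ[k] N.carrier}
    (hf : f ∈ homCov M N g') : Phi M N g f = 0 := by
  refine M.ext_graded fun i x hx => ?_
  rw [Phi_apply_graded M N g f hx, N.prj_ne (by omega : i - g' ≠ i - g) (hf.2 i x hx)]
  rfl

/-- The finite set of possible degrees. -/
noncomputable def degSet : Finset ℤ :=
  Finset.image (fun p : ℤ × ℤ => p.1 - p.2) (suppF M ×ˢ suppF N)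

theorem homCov_eq_bot_of_not_mem {g : ℤ} (hg : g ∉ degSet M N) : homCov M N g = ⊥ := by
  rw [eq_bot_iff]
  intro f hf
  rw [Submodule.mem_bot]
  refine M.ext_graded (g := (0 : M.carrier →ₗ[k] N.carrier)) fun i x hx => ?_
  rw [LinearMap.zero_apply]
  by_cases hi : M.grading i = ⊥
  · rw [show x = 0 by rw [hi, Submodule.mem_bot] at hx; exact hx, map_zero]
  by_cases hj : N.grading (i - g) = ⊥
  · have := hf.2 i x hx
    rw [hj, Submodule.mem_bot] at this
    exact this
  exact absurd (Finset.mem_image.mpr ⟨(i, i - g),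
    Finset.mem_product.mpr ⟨mem_suppF.mpr hi, mem_suppF.mpr hj⟩, by omega⟩) hg

theorem sum_Phi (f : M.carrier →ₗ[k] N.carrier) :
    ∑ g ∈ degSet M N, Phi M N g f = f := by
  classical
  refine LinearMap.ext fun x => ?_
  rw [LinearMap.sum_apply]
  have key : ∀ i ∈ suppF M, ∑ g ∈ degSet M N, N.prj (i - g) (f (M.prj i x))
      = f (M.prj i x) := by
    intro i hi
    have himg : ∑ j ∈ (degSet M N).image (fun g => i - g), N.prj j (f (M.prj i x))
        = ∑ g ∈ degSet M N, N.prj (i - g) (f (M.prj i x)) :=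
      Finset.sum_image (fun g1 _ g2 _ h => by omega)
    rw [← himg, N.prj_sum]
    intro j hj
    refine Finset.mem_image.mpr ⟨i - j, ?_, by omega⟩
    exact Finset.mem_image.mpr ⟨(i, j),
      Finset.mem_product.mpr ⟨hi, mem_suppF.mpr hj⟩, rfl⟩
  calc ∑ g ∈ degSet M N, Phi M N g f x
      = ∑ g ∈ degSet M N, ∑ i ∈ suppF M, N.prj (i - g) (f (M.prj i x)) := by
        refine Finset.sum_congr rfl fun g _ => Phi_apply M N g f x
    _ = ∑ i ∈ suppF M, ∑ g ∈ degSet M N, N.prj (i - g) (f (M.prj i x)) :=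
        Finset.sum_comm
    _ = ∑ i ∈ suppF M, f (M.prj i x) := Finset.sum_congr rfl key
    _ = f (∑ i ∈ suppF M, M.prj i x) := by rw [map_sum]
    _ = f x := by rw [M.prj_sum (fun j hj => mem_suppF.mpr hj)]

end Aux

section Final

variable {k : Type u} [Field k] {n : ℕ}

theorem finrank_finset_sup {V : Type u} [AddCommGroup V] [Module k V]
    [FiniteDimensional k V] (A : ℤ → Submodule k V) (hA : iSupIndep A) (s : Finset ℤ) :
    Module.finrank k ↥(s.sup A) = ∑ i ∈ s, Module.finrank k ↥(A i) := by
  classical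
  induction s using Finset.cons_induction with
  | empty => simp
  | cons a s ha ih =>
    rw [Finset.sup_cons, Finset.sum_cons, ← ih]
    have hdisj : Disjoint (A a) (s.sup A) := by
      refine (hA a).mono_right ?_
      refine Finset.sup_le fun j hj => ?_
      exact le_iSup_of_le j (le_iSup_of_le (by rintro rfl; exact ha hj) le_rfl)
    have hk := Submodule.finrank_sup_add_finrank_inf_eq (A a) (s.sup A)
    rw [disjoint_iff.mp hdisj] at hk
    simp only [finrank_bot, add_zero] at hk
    omega

theorem homCov_indep (M N : SCovObj k n) : iSupIndep (fun g => homCov M N g) := by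
  intro g
  rw [Submodule.disjoint_def]
  intro f hf1 hf2
  have hker : (⨆ g', ⨆ (_ : g' ≠ g), homCov M N g') ≤ LinearMap.ker (Phi M N g) := by
    refine iSup_le fun g' => iSup_le fun hg' => ?_
    intro f' hf'
    rw [LinearMap.mem_ker]
    exact Phi_eq_zero M N g g' hg' hf'
  have h0 : Phi M N g f = 0 := hker hf2
  rw [← Phi_eq_self M N g hf1, h0]

theorem homCov_iSup (M N : SCovObj k n) :
    (⨆ g : ℤ, homCov M N g) = homS M.toSObj N.toSObj := by
  apply le_antisymm
  · exact iSup_le fun g f hf => hf.1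
  · intro f hf
    rw [← sum_Phi M N f]
    exact Submodule.sum_mem _ fun g _ =>
      Submodule.mem_iSup_of_mem g (Phi_mem_homCov M N g hf)

end Final


/-- (2.2.2) For objects `M, N` of `S_k(ñ)`,
`dim Hom_{S(n)}(πM, πN) = Σ_{g∈ℤ} dim Hom_{S(ñ)}(M, N[g])`, with only finitely many
nonzero summands. -/
theorem stmt11 (k : Type u) [Field k] (n : ℕ) (M N : SCovObj k n) :
    {g : ℤ | homCov M N g ≠ ⊥}.Finite ∧
    Module.finrank k (homS M.toSObj N.toSObj) =
      ∑ᶠ g : ℤ, Module.finrank k (homCov M N g) := by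
  have hfin : ∀ g ∉ degSet M N, homCov M N g = ⊥ :=
    fun g hg => homCov_eq_bot_of_not_mem M N hg
  have hsup2 : (degSet M N).sup (fun g => homCov M N g) = ⨆ g, homCov M N g := by
    apply le_antisymm
    · exact Finset.sup_le fun g _ => le_iSup _ g
    · refine iSup_le fun g => ?_
      by_cases hg : g ∈ degSet M N
      · exact Finset.le_sup hg
      · rw [hfin g hg]; exact bot_le
  constructor
  · refine Set.Finite.subset (degSet M N).finite_toSet fun g hg => ?_
    by_contra hmem
    exact hg (hfin g hmem)
  · rw [← homCov_iSup M N, ← hsup2,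
      finrank_finset_sup (fun g => homCov M N g) (homCov_indep M N)]
    refine (finsum_eq_sum_of_support_subset _ fun g hg => ?_).symm
    rw [Function.mem_support] at hg
    by_contra hmem
    rw [hfin g hmem] at hg
    simp at hg
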